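/- For any operator T on H_d with T†T ≤ I, there exist isometries U, V from H_d into H_{d'} with d' = 2d such that T = U†V. -/

import Mathlib

open Matrix
open scoped ComplexOrder

/-- any contraction `T` (i.e. `T†T ≤ I`) on `H_d` factors as `T = U†V`
for isometries `U, V : H_d → H_{2d}`. -/
theorem contraction_as_product_of_isometries {d : ℕ}
    (T : Matrix (Fin d) (Fin d) ℂ) (hT : ((1 : Matrix (Fin d) (Fin d) ℂ) - Tᴴ * T).PosSemidef) :
    ∃ U V : Matrix (Fin (2 * d)) (Fin d) ℂ,
      Uᴴ * U = 1 ∧ Vᴴ * V = 1 ∧ T = Uᴴ * V := by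
  set S := (open scoped MatrixOrder in CFC.sqrt (1 - Tᴴ * T)) with hS
  have hSH : Sᴴ = S := (open scoped MatrixOrder in (CFC.sqrt_nonneg (1 - Tᴴ * T)).posSemidef.isHermitian)
  have hSS : S * S = 1 - Tᴴ * T := (open scoped MatrixOrder in CFC.sqrt_mul_sqrt_self (1 - Tᴴ * T) hT.nonneg)
  let e : Fin (2 * d) ≃ Fin d ⊕ Fin d := (finCongr (two_mul d)).trans finSumFinEquiv.symm
  let U0 : Matrix (Fin d ⊕ Fin d) (Fin d) ℂ := fromRows 1 0
  let V0 : Matrix (Fin d ⊕ Fin d) (Fin d) ℂ := fromRows T S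
  refine ⟨U0.submatrix e id, V0.submatrix e id, ?_, ?_, ?_⟩
  · rw [conjTranspose_submatrix, submatrix_mul_equiv, conjTranspose_fromRows_eq_fromCols_conjTranspose,
      fromCols_mul_fromRows]
    simp [U0]
  · rw [conjTranspose_submatrix, submatrix_mul_equiv, conjTranspose_fromRows_eq_fromCols_conjTranspose,
      fromCols_mul_fromRows]
    simp [V0, hSH, hSS]
  · rw [conjTranspose_submatrix, submatrix_mul_equiv, conjTranspose_fromRows_eq_fromCols_conjTranspose,
      fromCols_mul_fromRows]
    simp [U0, V0]
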